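/- The second derivative of φ(x) = (τ(x), x, τ(x)) in directions X, Y ∈ ℝⁿ equals Hess τ(X,Y)·(1,0,...,0,1), where Hess τ is the Euclidean Hessian of τ. Consequently, if Δτ(x) ≠ 0 for all x ∈ Ω (Δ the Euclidean Laplacian), then the mean curvature vector H(x) = (Δτ(x)/n)·(1,0,...,0,1) is null and nonzero at every point, so φ is marginally trapped. -/

import Mathlib

noncomputable def Lor (n : ℕ) (u v : Fin (n + 2) → ℝ) : ℝ :=
  (∑ i, u i * v i) - 2 * u 0 * v 0

/-- The immersion φ(x) = (τ(x), x, τ(x)). -/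
noncomputable def phi (n : ℕ) (τ : (Fin n → ℝ) → ℝ) (x : Fin n → ℝ) : Fin (n + 2) → ℝ :=
  Fin.cons (τ x) (Fin.snoc x (τ x))

/-- The vector ξ = (1, 0, ..., 0, 1) ∈ ℝ^{n+2}₁. -/
noncomputable def xi (n : ℕ) : Fin (n + 2) → ℝ :=
  Fin.cons 1 (Fin.snoc (0 : Fin n → ℝ) 1)

/-- The Euclidean Hessian of τ at x in directions X, Y. -/
noncomputable def hess (n : ℕ) (τ : (Fin n → ℝ) → ℝ) (x X Y : Fin n → ℝ) : ℝ :=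
  fderiv ℝ (fun y => fderiv ℝ τ y X) x Y

/-- The Euclidean Laplacian of τ at x. -/
noncomputable def lap (n : ℕ) (τ : (Fin n → ℝ) → ℝ) (x : Fin n → ℝ) : ℝ :=
  ∑ i : Fin n, hess n τ x (Pi.single i 1) (Pi.single i 1)

/-- The second derivative of φ(x) = (τ(x), x, τ(x)) in directions X, Y equals
Hess τ(X,Y)·(1,0,...,0,1). Consequently, if Δτ never vanishes on Ω, the mean curvature
vector H = (Δτ/n)·(1,0,...,0,1) is null and nonzero at every point, so φ is marginally
trapped. -/
theorem stmt6 (n : ℕ) (hn : 0 < n) (Ω : Set (Fin n → ℝ)) (hΩ : IsOpen Ω)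
    (τ : (Fin n → ℝ) → ℝ) (hτ : ContDiff ℝ 2 τ) :
    (∀ x ∈ Ω, ∀ X Y : Fin n → ℝ,
        fderiv ℝ (fun y => fderiv ℝ (phi n τ) y X) x Y = hess n τ x X Y • xi n) ∧
    ((∀ x ∈ Ω, lap n τ x ≠ 0) →
      ∀ x ∈ Ω,
        Lor n ((lap n τ x / n) • xi n) ((lap n τ x / n) • xi n) = 0 ∧
        (lap n τ x / n) • xi n ≠ 0) := by

  have hτ1 : ContDiff ℝ 1 (fderiv ℝ τ) := hτ.fderiv_right (by norm_num)
  constructor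
  · intro x hx X Y
    set L : (Fin n → ℝ) →L[ℝ] (Fin (n + 2) → ℝ) :=
      ContinuousLinearMap.pi
        (Fin.cons 0 (Fin.snoc (fun k => ContinuousLinearMap.proj k) 0)) with hL
    have hphi : phi n τ = fun y => τ y • xi n + L y := by
      funext y
      funext i
      refine Fin.cases ?_ (fun j => ?_) i
      · simp [phi, xi, hL]
      · refine Fin.lastCases ?_ (fun k => ?_) j
        · simp only [phi, xi, hL, ContinuousLinearMap.pi_apply, Fin.cons_succ,
            Fin.snoc_last, Pi.add_apply, Pi.smul_apply, smul_eq_mul, mul_one,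
            ContinuousLinearMap.zero_apply, add_zero]
        · simp [phi, xi, hL]
    have hτd : Differentiable ℝ τ := hτ.differentiable (by norm_num)
    have hd : ∀ y, fderiv ℝ (phi n τ) y = ((fderiv ℝ τ y).smulRight (xi n)) + L := by
      intro y
      rw [hphi]
      rw [fderiv_fun_add ((hτd y).smul_const _) L.differentiableAt]
      rw [fderiv_smul_const (hτd y), L.fderiv]
    have heq : (fun y => fderiv ℝ (phi n τ) y X)
        = fun y => (fderiv ℝ τ y X) • xi n + L X := by
      funext y
      rw [hd y]
      simp
    have hdiff : DifferentiableAt ℝ (fun y => fderiv ℝ τ y X) x :=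
      ((ContinuousLinearMap.apply ℝ ℝ X).differentiable.comp
        (hτ1.differentiable one_ne_zero)).differentiableAt
    rw [heq, fderiv_add_const, fderiv_smul_const hdiff]
    simp [hess]
  · intro h x hx
    have hc : lap n τ x / n ≠ 0 :=
      div_ne_zero (h x hx) (Nat.cast_ne_zero.mpr hn.ne')
    constructor
    · simp only [Lor, Pi.smul_apply, smul_eq_mul]
      rw [Fin.sum_univ_succ, Fin.sum_univ_castSucc]
      simp only [xi, Fin.cons_zero, Fin.cons_succ, Fin.snoc_castSucc, Fin.snoc_last,
        Pi.zero_apply, mul_zero, mul_one, zero_mul, Finset.sum_const_zero, add_zero,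
        zero_add]
      ring
    · intro hzero
      have h0 := congrFun hzero 0
      simp only [Pi.smul_apply, xi, Fin.cons_zero, smul_eq_mul, mul_one,
        Pi.zero_apply] at h0
      exact hc h0
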